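/- Let (A, C, ψ) be an entwining structure. Then C := A ⊗ C is an A-coring with: (i) bimodule structure a·(a' ⊗ c)·a'' = a a' ψ(c ⊗ a''); (ii) coproduct Δ_C(a ⊗ c) = (a ⊗ c₍₁₎) ⊗_A (1 ⊗ c₍₂₎); (iii) counit ε_C(a ⊗ c) = ε(c) a. Conversely, if A is an algebra, C a coalgebra, and A ⊗ C carries an A-coring structure with left action a·(a' ⊗ c) = aa' ⊗ c, coproduct and counit as in (ii), (iii), then ψ : C ⊗ A → A ⊗ C, c ⊗ a ↦ (1 ⊗ c)·a, is an entwining map, i.e., (A, C, ψ) is an entwining structure. -/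

import Mathlib

/-!
STATEMENT 12 (Takeuchi).  For an entwining structure (A, C, ψ), A ⊗ C is an
A-coring with a·(a' ⊗ c)·a'' = a a' ψ(c ⊗ a''), Δ(a ⊗ c) = (a ⊗ c₁) ⊗_A (1 ⊗ c₂),
ε(a ⊗ c) = ε(c) a; conversely, such an A-coring structure on A ⊗ C yields an
entwining map ψ(c ⊗ a) = (1 ⊗ c)·a.  Here `A ⊗_A`-tensor products are realised
as quotients of `⊗[k]` by the bimodule relations, and equalities in them as
membership of differences of representatives in the relation submodules.
-/

open TensorProduct LinearMap

noncomputable section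

namespace CGal

variable {k : Type*} [Field k]
variable {A : Type*} [Ring A] [Algebra k A]
variable {C : Type*} [AddCommGroup C] [Module k C] [Coalgebra k C]

/-- The bow-tie axioms of an entwining structure `(A, C, ψ)`. -/
def IsEntwining (ψ : C ⊗[k] A →ₗ[k] A ⊗[k] C) : Prop :=
  (ψ ∘ₗ (lTensor C (LinearMap.mul' k A))
     = (rTensor C (LinearMap.mul' k A))
        ∘ₗ (TensorProduct.assoc k A A C).symm.toLinearMap
        ∘ₗ (lTensor A ψ)
        ∘ₗ (TensorProduct.assoc k A C A).toLinearMap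
        ∘ₗ (rTensor A ψ)
        ∘ₗ (TensorProduct.assoc k C A A).symm.toLinearMap) ∧
  (∀ c : C, ψ (c ⊗ₜ[k] (1 : A)) = (1 : A) ⊗ₜ[k] c) ∧
  ((lTensor A (Coalgebra.comul : C →ₗ[k] C ⊗[k] C)) ∘ₗ ψ
     = (TensorProduct.assoc k A C C).toLinearMap
        ∘ₗ (rTensor C ψ)
        ∘ₗ (TensorProduct.assoc k C A C).symm.toLinearMap
        ∘ₗ (lTensor C ψ)
        ∘ₗ (TensorProduct.assoc k C C A).toLinearMap
        ∘ₗ (rTensor A (Coalgebra.comul : C →ₗ[k] C ⊗[k] C))) ∧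
  ((TensorProduct.rid k A).toLinearMap
      ∘ₗ (lTensor A (Coalgebra.counit : C →ₗ[k] k)) ∘ₗ ψ
     = (TensorProduct.lid k A).toLinearMap
      ∘ₗ (rTensor A (Coalgebra.counit : C →ₗ[k] k)))

/-- The right `A`-action on `A ⊗ C` induced by `ψ`:
`(a' ⊗ c)·a'' = a' ψ(c ⊗ a'')`. -/
def ractOf (ψ : C ⊗[k] A →ₗ[k] A ⊗[k] C) :
    (A ⊗[k] C) ⊗[k] A →ₗ[k] A ⊗[k] C :=
  (rTensor C (LinearMap.mul' k A))
    ∘ₗ (TensorProduct.assoc k A A C).symm.toLinearMap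
    ∘ₗ (lTensor A ψ)
    ∘ₗ (TensorProduct.assoc k A C A).toLinearMap

/-- Representative of the coring coproduct:
`a ⊗ c ↦ (a ⊗ c₍₁₎) ⊗ (1 ⊗ c₍₂₎)`. -/
def coringComul : A ⊗[k] C →ₗ[k] (A ⊗[k] C) ⊗[k] (A ⊗[k] C) :=
  (lTensor (A ⊗[k] C) ((TensorProduct.mk k A C) 1))
    ∘ₗ (TensorProduct.assoc k A C C).symm.toLinearMap
    ∘ₗ (lTensor A (Coalgebra.comul : C →ₗ[k] C ⊗[k] C))

/-- The coring counit: `a ⊗ c ↦ ε(c) a`. -/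
def coringCounit : A ⊗[k] C →ₗ[k] A :=
  (TensorProduct.rid k A).toLinearMap
    ∘ₗ (lTensor A (Coalgebra.counit : C →ₗ[k] k))

/-- The kernel of `(A⊗C) ⊗ (A⊗C) → (A⊗C) ⊗_A (A⊗C)`, for the right action `ρ`
on the left factor and the standard left action on the right factor. -/
def corRel (ρ : (A ⊗[k] C) ⊗[k] A →ₗ[k] A ⊗[k] C) :
    Submodule k ((A ⊗[k] C) ⊗[k] (A ⊗[k] C)) :=
  Submodule.span k
    {x | ∃ (u : A ⊗[k] C) (a : A) (v : A ⊗[k] C),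
        x = (ρ (u ⊗ₜ[k] a)) ⊗ₜ[k] v - u ⊗ₜ[k] (a • v)}

/-- Collapse of the left `A`-action: `a ⊗ u ↦ a • u` on `A ⊗ (A ⊗ C)`. -/
def lactCollapse : A ⊗[k] (A ⊗[k] C) →ₗ[k] A ⊗[k] C :=
  (rTensor C (LinearMap.mul' k A))
    ∘ₗ (TensorProduct.assoc k A A C).symm.toLinearMap

/-- `(A ⊗ C, standard left action, ρ, coringComul, coringCounit)` is an
`A`-coring (with `⊗_A`-level equalities phrased on representatives modulo
the relation submodules). -/
def IsCoringOn (ρ : (A ⊗[k] C) ⊗[k] A →ₗ[k] A ⊗[k] C) : Prop :=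
  -- ρ is a unital associative right action:
  (∀ u : A ⊗[k] C, ρ (u ⊗ₜ[k] (1 : A)) = u) ∧
  (∀ (u : A ⊗[k] C) (a a' : A),
      ρ (u ⊗ₜ[k] (a * a')) = ρ ((ρ (u ⊗ₜ[k] a)) ⊗ₜ[k] a')) ∧
  -- left and right actions commute (bimodule):
  (∀ (a : A) (u : A ⊗[k] C) (a'' : A),
      ρ ((a • u) ⊗ₜ[k] a'') = a • ρ (u ⊗ₜ[k] a'')) ∧
  -- the counit is a bimodule map:
  (∀ (a : A) (u : A ⊗[k] C), coringCounit (k := k) (a • u) = a * coringCounit u) ∧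
  (∀ (u : A ⊗[k] C) (a : A), coringCounit (k := k) (ρ (u ⊗ₜ[k] a)) = coringCounit u * a) ∧
  -- the coproduct is a bimodule map (right linearity modulo relations):
  (∀ (a : A) (u : A ⊗[k] C),
      coringComul (k := k) (a • u) = a • coringComul u) ∧
  (∀ (u : A ⊗[k] C) (a : A),
      coringComul (k := k) (ρ (u ⊗ₜ[k] a))
        - (lTensor (A ⊗[k] C) (ρ ∘ₗ ((TensorProduct.mk k (A ⊗[k] C) A).flip a)))
            (coringComul u)
        ∈ corRel ρ) ∧
  -- coassociativity modulo the triple relations: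
  (∀ u : A ⊗[k] C,
      (TensorProduct.assoc k (A ⊗[k] C) (A ⊗[k] C) (A ⊗[k] C))
          ((rTensor (A ⊗[k] C) (coringComul (k := k))) (coringComul u))
        - (lTensor (A ⊗[k] C) (coringComul (k := k))) (coringComul u)
      ∈ (Submodule.span k
           {x | ∃ (v : A ⊗[k] C) (a : A) (w : (A ⊗[k] C) ⊗[k] (A ⊗[k] C)),
              x = (ρ (v ⊗ₜ[k] a)) ⊗ₜ[k] w - v ⊗ₜ[k] (a • w)}
         ⊔ LinearMap.range (lTensor (A ⊗[k] C) (corRel ρ).subtype))) ∧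
  -- counitality:
  (∀ u : A ⊗[k] C,
      lactCollapse (k := k)
        ((rTensor (A ⊗[k] C) (coringCounit (k := k))) (coringComul u)) = u) ∧
  (∀ u : A ⊗[k] C,
      ρ ((lTensor (A ⊗[k] C) (coringCounit (k := k))) (coringComul u)) = u)

section Aux
variable {k : Type*} [Field k]
variable {A : Type*} [Ring A] [Algebra k A]
variable {C : Type*} [AddCommGroup C] [Module k C] [Coalgebra k C]

lemma lactCollapse_tmul (a : A) (x : A ⊗[k] C) :
    lactCollapse (k := k) (a ⊗ₜ[k] x) = a • x := by
  induction x using TensorProduct.induction_on with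
  | zero => simp [lactCollapse]
  | tmul b c => simp [lactCollapse, smul_tmul', smul_eq_mul]
  | add x y hx hy => rw [tmul_add, map_add, hx, hy, smul_add]

lemma ractOf_tmul (ψ : C ⊗[k] A →ₗ[k] A ⊗[k] C) (a : A) (c : C) (b : A) :
    ractOf ψ ((a ⊗ₜ[k] c) ⊗ₜ[k] b) = a • ψ (c ⊗ₜ[k] b) := by
  have : ractOf ψ ((a ⊗ₜ[k] c) ⊗ₜ[k] b)
      = lactCollapse (k := k) (a ⊗ₜ[k] ψ (c ⊗ₜ[k] b)) := by
    simp [ractOf, lactCollapse]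
  rw [this, lactCollapse_tmul]

lemma ractOf_smul (ψ : C ⊗[k] A →ₗ[k] A ⊗[k] C) (a : A) (u : A ⊗[k] C) (b : A) :
    ractOf ψ ((a • u) ⊗ₜ[k] b) = a • ractOf ψ (u ⊗ₜ[k] b) := by
  induction u using TensorProduct.induction_on with
  | zero => simp
  | tmul a' c => rw [smul_tmul', smul_eq_mul, ractOf_tmul, ractOf_tmul, mul_smul]
  | add x y hx hy => rw [smul_add, add_tmul, map_add, add_tmul, map_add, hx, hy, smul_add]

lemma coringComul_tmul (b : A) (c : C) :
    coringComul (k := k) (b ⊗ₜ[k] c)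
      = TensorProduct.map (TensorProduct.mk k A C b) (TensorProduct.mk k A C 1)
          (Coalgebra.comul c) := by
  have h : ∀ z : C ⊗[k] C,
      (lTensor (A ⊗[k] C) ((TensorProduct.mk k A C) 1))
        ((TensorProduct.assoc k A C C).symm (b ⊗ₜ[k] z))
      = TensorProduct.map (TensorProduct.mk k A C b) (TensorProduct.mk k A C 1) z := by
    intro z
    induction z using TensorProduct.induction_on with
    | zero => simp
    | tmul c₁ c₂ => simp
    | add x y hx hy => rw [tmul_add, map_add, map_add, hx, hy, map_add]
  simpa [coringComul] using h (Coalgebra.comul c)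

lemma coringComul_smul (a : A) (u : A ⊗[k] C) :
    coringComul (k := k) (a • u) = a • coringComul (k := k) u := by
  induction u using TensorProduct.induction_on with
  | zero => simp
  | tmul b c =>
      rw [smul_tmul', smul_eq_mul, coringComul_tmul, coringComul_tmul]
      induction Coalgebra.comul (R := k) c using TensorProduct.induction_on with
      | zero => simp
      | tmul c₁ c₂ => simp [smul_tmul', smul_eq_mul]
      | add x y hx hy => rw [map_add, map_add, hx, hy, smul_add]
  | add x y hx hy => rw [smul_add, map_add, map_add, hx, hy, smul_add]

lemma coringCounit_tmul (a : A) (c : C) :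
    coringCounit (k := k) (a ⊗ₜ[k] c) = (Coalgebra.counit (R := k) c : k) • a := by
  simp [coringCounit]

lemma coringCounit_smul (a : A) (u : A ⊗[k] C) :
    coringCounit (k := k) (a • u) = a * coringCounit (k := k) u := by
  induction u using TensorProduct.induction_on with
  | zero => simp
  | tmul b c => rw [smul_tmul', smul_eq_mul, coringCounit_tmul, coringCounit_tmul, mul_smul_comm]
  | add x y hx hy => rw [smul_add, map_add, hx, hy, map_add, mul_add]

lemma mem_corRel (ρ : (A ⊗[k] C) ⊗[k] A →ₗ[k] A ⊗[k] C)
    (u : A ⊗[k] C) (a : A) (v : A ⊗[k] C) :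
    (ρ (u ⊗ₜ[k] a)) ⊗ₜ[k] v - u ⊗ₜ[k] (a • v) ∈ corRel ρ :=
  Submodule.subset_span ⟨u, a, v, rfl⟩

end Aux
set_option maxHeartbeats 2000000 in
theorem takeuchi_entwining_coring :
    (∀ ψ : C ⊗[k] A →ₗ[k] A ⊗[k] C, IsEntwining ψ → IsCoringOn (ractOf ψ)) ∧
    (∀ ρ : (A ⊗[k] C) ⊗[k] A →ₗ[k] A ⊗[k] C,
        IsCoringOn ρ →
        IsEntwining (ρ ∘ₗ (rTensor A ((TensorProduct.mk k A C) 1)))) := by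
  constructor
  · intro ψ hψ
    obtain ⟨h1, h2, h3, h4⟩ := hψ
    have hmul : ∀ (c : C) (a a' : A),
        ψ (c ⊗ₜ[k] (a * a')) = ractOf ψ (ψ (c ⊗ₜ[k] a) ⊗ₜ[k] a') := by
      intro c a a'
      have h := LinearMap.congr_fun h1 (c ⊗ₜ[k] (a ⊗ₜ[k] a'))
      simpa [ractOf, mul'_apply] using h
    have hcu : ∀ (c : C) (a : A),
        coringCounit (k := k) (ψ (c ⊗ₜ[k] a)) = (Coalgebra.counit c : k) • a := by
      intro c a
      have h := LinearMap.congr_fun h4 (c ⊗ₜ[k] a)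
      simpa [coringCounit] using h
    refine ⟨?_, ?_, ?_, ?_, ?_, ?_, ?_, ?_, ?_, ?_⟩
    · -- unital
      intro u
      induction u using TensorProduct.induction_on with
      | zero => simp
      | tmul a c => rw [ractOf_tmul, h2, smul_tmul', smul_eq_mul, mul_one]
      | add x y hx hy => rw [add_tmul, map_add, hx, hy]
    · -- associative
      intro u a a'
      induction u using TensorProduct.induction_on with
      | zero => simp
      | tmul a₀ c => rw [ractOf_tmul, hmul, ractOf_tmul, ractOf_smul]
      | add x y hx hy => simp only [add_tmul, map_add, hx, hy]
    · exact fun a u b => ractOf_smul ψ a u b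
    · exact fun a u => coringCounit_smul a u
    · -- counit right-linear
      intro u a
      induction u using TensorProduct.induction_on with
      | zero => simp
      | tmul a₀ c =>
          rw [ractOf_tmul, coringCounit_smul, hcu, coringCounit_tmul,
            mul_smul_comm, smul_mul_assoc]
      | add x y hx hy => simp only [add_tmul, map_add, hx, hy, add_mul]
    · exact fun a u => coringComul_smul a u
    · -- comul right-linear mod relations
      intro u a
      induction u using TensorProduct.induction_on with
      | zero => simpa using zero_mem _
      | add x y hx hy =>
          simp only [add_tmul, map_add]
          rw [show ∀ p q r s : (A ⊗[k] C) ⊗[k] (A ⊗[k] C), p + q - (r + s) = (p - r) + (q - s) from fun _ _ _ _ => by abel]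
          exact add_mem hx hy
      | tmul a₀ c =>
          have h3' := LinearMap.congr_fun h3 (c ⊗ₜ[k] a)
          simp only [coe_comp, Function.comp_apply, LinearEquiv.coe_coe,
            rTensor_tmul] at h3'
          have hcc : coringComul (k := k) (ψ (c ⊗ₜ[k] a))
              = (lTensor (A ⊗[k] C) ((TensorProduct.mk k A C) 1))
                  ((TensorProduct.assoc k A C C).symm
                    ((lTensor A (Coalgebra.comul : C →ₗ[k] C ⊗[k] C)) (ψ (c ⊗ₜ[k] a)))) := by
            simp [coringComul]
          rw [ractOf_tmul, coringComul_smul, hcc, h3', LinearEquiv.symm_apply_apply,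
            coringComul_tmul]
          generalize Coalgebra.comul (R := k) c = z
          induction z using TensorProduct.induction_on with
          | zero => simpa using zero_mem _
          | add z w hz hw =>
              simp only [add_tmul, map_add, smul_add]
              rw [show ∀ p q r s : (A ⊗[k] C) ⊗[k] (A ⊗[k] C), p + q - (r + s) = (p - r) + (q - s) from fun _ _ _ _ => by abel]
              exact add_mem hz hw
          | tmul c₁ c₂ =>
              simp only [assoc_tmul, lTensor_tmul, map_tmul, mk_apply, coe_comp,
                Function.comp_apply, flip_apply, TensorProduct.mk_apply]
              rw [ractOf_tmul, one_smul]
              generalize ψ (c₂ ⊗ₜ[k] a) = w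
              induction w using TensorProduct.induction_on with
              | zero => simpa using zero_mem _
              | add w₁ w₂ hw₁ hw₂ =>
                  simp only [tmul_add, map_add, smul_add]
                  rw [show ∀ p q r s : (A ⊗[k] C) ⊗[k] (A ⊗[k] C), p + q - (r + s) = (p - r) + (q - s) from fun _ _ _ _ => by abel]
                  exact add_mem hw₁ hw₂
              | tmul b d =>
                  simp only [assoc_symm_tmul, rTensor_tmul, lTensor_tmul]
                  rw [smul_tmul', ← ractOf_tmul]
                  have hb : b ⊗ₜ[k] d = b • ((1 : A) ⊗ₜ[k] d) := by
                    rw [smul_tmul', smul_eq_mul, mul_one]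
                  rw [hb]
                  exact mem_corRel (ractOf ψ) (a₀ ⊗ₜ[k] c₁) b ((1 : A) ⊗ₜ[k] d)
    · -- coassociativity
      intro u
      have key : (TensorProduct.assoc k (A ⊗[k] C) (A ⊗[k] C) (A ⊗[k] C))
          ((rTensor (A ⊗[k] C) (coringComul (k := k))) (coringComul u))
          = (lTensor (A ⊗[k] C) (coringComul (k := k))) (coringComul u) := by
        induction u using TensorProduct.induction_on with
        | zero => simp
        | add x y hx hy => simp only [map_add, hx, hy]
        | tmul a₀ c =>
            rw [coringComul_tmul]
            have hL : ∀ z : C ⊗[k] C,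
                (TensorProduct.assoc k (A ⊗[k] C) (A ⊗[k] C) (A ⊗[k] C))
                  ((rTensor (A ⊗[k] C) (coringComul (k := k)))
                    (TensorProduct.map (TensorProduct.mk k A C a₀) (TensorProduct.mk k A C 1) z))
                = (TensorProduct.map (TensorProduct.mk k A C a₀)
                    (TensorProduct.map (TensorProduct.mk k A C 1) (TensorProduct.mk k A C 1)))
                    ((TensorProduct.assoc k C C C)
                      ((rTensor C (Coalgebra.comul : C →ₗ[k] C ⊗[k] C)) z)) := by
              intro z
              induction z using TensorProduct.induction_on with
              | zero => simp
              | add z w hz hw => simp only [map_add, hz, hw]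
              | tmul c₁ c₂ =>
                  simp only [map_tmul, rTensor_tmul, mk_apply, coringComul_tmul]
                  induction Coalgebra.comul (R := k) c₁ using TensorProduct.induction_on with
                  | zero => simp
                  | add y₁ y₂ hy₁ hy₂ => simp only [map_add, add_tmul, hy₁, hy₂]
                  | tmul d₁ d₂ => simp
            have hR : ∀ z : C ⊗[k] C,
                (lTensor (A ⊗[k] C) (coringComul (k := k)))
                    (TensorProduct.map (TensorProduct.mk k A C a₀) (TensorProduct.mk k A C 1) z)
                = (TensorProduct.map (TensorProduct.mk k A C a₀)
                    (TensorProduct.map (TensorProduct.mk k A C 1) (TensorProduct.mk k A C 1)))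
                    ((lTensor C (Coalgebra.comul : C →ₗ[k] C ⊗[k] C)) z) := by
              intro z
              induction z using TensorProduct.induction_on with
              | zero => simp
              | add z w hz hw => simp only [map_add, hz, hw]
              | tmul c₁ c₂ => simp [coringComul_tmul]
            rw [hL, hR]
            congr 1
            exact Coalgebra.coassoc_apply c
      rw [key, sub_self]
      exact zero_mem _
    · -- counit left
      intro u
      induction u using TensorProduct.induction_on with
      | zero => simp
      | add x y hx hy => simp only [map_add, hx, hy]
      | tmul a₀ c =>
          rw [coringComul_tmul]
          have h9 : ∀ z : C ⊗[k] C,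
              lactCollapse (k := k)
                ((rTensor (A ⊗[k] C) (coringCounit (k := k)))
                  (TensorProduct.map (TensorProduct.mk k A C a₀) (TensorProduct.mk k A C 1) z))
              = a₀ ⊗ₜ[k] (TensorProduct.lid k C)
                  ((rTensor C (Coalgebra.counit : C →ₗ[k] k)) z) := by
            intro z
            induction z using TensorProduct.induction_on with
            | zero => simp
            | add z w hz hw => simp only [map_add, hz, hw, tmul_add]
            | tmul c₁ c₂ =>
                simp only [map_tmul, rTensor_tmul, mk_apply, coringCounit_tmul,
                  lactCollapse_tmul, lid_tmul, smul_tmul', smul_eq_mul, mul_one]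
                rw [smul_tmul]
          rw [h9, Coalgebra.rTensor_counit_comul]
          simp
    · -- counit right
      intro u
      induction u using TensorProduct.induction_on with
      | zero => simp
      | add x y hx hy => simp only [map_add, hx, hy]
      | tmul a₀ c =>
          rw [coringComul_tmul]
          have h10 : ∀ z : C ⊗[k] C,
              ractOf ψ ((lTensor (A ⊗[k] C) (coringCounit (k := k)))
                  (TensorProduct.map (TensorProduct.mk k A C a₀) (TensorProduct.mk k A C 1) z))
              = a₀ ⊗ₜ[k] (TensorProduct.rid k C)
                  ((lTensor C (Coalgebra.counit : C →ₗ[k] k)) z) := by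
            intro z
            induction z using TensorProduct.induction_on with
            | zero => simp
            | add z w hz hw => simp only [map_add, hz, hw, tmul_add]
            | tmul c₁ c₂ =>
                simp only [map_tmul, lTensor_tmul, mk_apply, coringCounit_tmul,
                  rid_tmul]
                rw [tmul_smul, map_smul, ractOf_tmul, h2, smul_tmul', smul_eq_mul,
                  mul_one, tmul_smul]
          rw [h10, Coalgebra.lTensor_counit_comul]
          simp

  · intro ρ hρ
    obtain ⟨hu, hassoc, hbi, hcl, hcr, hcml, hcmr, hco, he1, he2⟩ := hρ
    set ψ : C ⊗[k] A →ₗ[k] A ⊗[k] C := ρ ∘ₗ (rTensor A ((TensorProduct.mk k A C) 1))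
      with hψdef
    have hψ : ∀ (c : C) (a : A), ψ (c ⊗ₜ[k] a) = ρ (((1 : A) ⊗ₜ[k] c) ⊗ₜ[k] a) := by
      intro c a; simp [hψdef]
    have hone : ∀ (b : A) (d : C), b • ((1 : A) ⊗ₜ[k] d) = b ⊗ₜ[k] d := by
      intro b d; rw [smul_tmul', smul_eq_mul, mul_one]
    have hrho : ∀ (w : A ⊗[k] C) (a' : A),
        (rTensor C (LinearMap.mul' k A))
          ((TensorProduct.assoc k A A C).symm
            ((lTensor A ψ) ((TensorProduct.assoc k A C A) (w ⊗ₜ[k] a'))))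
        = ρ (w ⊗ₜ[k] a') := by
      intro w a'
      induction w using TensorProduct.induction_on with
      | zero => simp
      | add x y hx hy => simp only [add_tmul, map_add, hx, hy]
      | tmul b d =>
          have : (rTensor C (LinearMap.mul' k A))
              ((TensorProduct.assoc k A A C).symm (b ⊗ₜ[k] ψ (d ⊗ₜ[k] a')))
              = lactCollapse (k := k) (b ⊗ₜ[k] ψ (d ⊗ₜ[k] a')) := rfl
          simp only [assoc_tmul, lTensor_tmul, this, lactCollapse_tmul]
          rw [hψ, ← hbi, hone]
    -- the retraction Q
    set Q : (A ⊗[k] C) ⊗[k] (A ⊗[k] C) →ₗ[k] A ⊗[k] (C ⊗[k] C) :=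
      (TensorProduct.assoc k A C C).toLinearMap
        ∘ₗ (rTensor C ρ)
        ∘ₗ (TensorProduct.assoc k (A ⊗[k] C) A C).symm.toLinearMap with hQdef
    have hQtmul : ∀ (u : A ⊗[k] C) (a' : A) (c' : C),
        Q (u ⊗ₜ[k] (a' ⊗ₜ[k] c'))
          = (TensorProduct.assoc k A C C) (ρ (u ⊗ₜ[k] a') ⊗ₜ[k] c') := by
      intro u a' c'; simp [hQdef]
    have hQ0 : ∀ x ∈ corRel ρ, Q x = 0 := by
      intro x hx
      induction hx using Submodule.span_induction with
      | mem x hx =>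
          obtain ⟨u, a, v, rfl⟩ := hx
          rw [map_sub, sub_eq_zero]
          induction v using TensorProduct.induction_on with
          | zero => simp
          | add v₁ v₂ hv₁ hv₂ => simp only [tmul_add, smul_add, map_add, hv₁, hv₂]
          | tmul a' c' =>
              rw [hQtmul, smul_tmul', smul_eq_mul, hQtmul, ← hassoc]
      | zero => simp
      | add x y _ _ hx hy => rw [map_add, hx, hy, add_zero]
      | smul a x _ hx => rw [map_smul, hx, smul_zero]
    have hQcm : ∀ u : A ⊗[k] C,
        Q (coringComul (k := k) u)
          = (lTensor A (Coalgebra.comul : C →ₗ[k] C ⊗[k] C)) u := by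
      intro u
      induction u using TensorProduct.induction_on with
      | zero => simp
      | add x y hx hy => simp only [map_add, hx, hy]
      | tmul a₀ c =>
          rw [coringComul_tmul, lTensor_tmul]
          induction Coalgebra.comul (R := k) c using TensorProduct.induction_on with
          | zero => simp
          | add z w hz hw => simp only [map_add, hz, hw, tmul_add]
          | tmul c₁ c₂ =>
              simp only [map_tmul, mk_apply]
              rw [hQtmul, hu]
              simp
    refine ⟨?_, ?_, ?_, ?_⟩
    · -- multiplicativity
      apply TensorProduct.ext'
      intro c y
      induction y using TensorProduct.induction_on with
      | zero => simp
      | add y₁ y₂ hy₁ hy₂ => simp only [tmul_add, map_add, hy₁, hy₂]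
      | tmul a a' =>
          simp only [coe_comp, Function.comp_apply, lTensor_tmul, mul'_apply,
            LinearEquiv.coe_coe, assoc_symm_tmul, rTensor_tmul]
          rw [hrho, hψ, hψ, hassoc]
    · -- unitality
      intro c
      rw [hψ, hu]
    · -- comultiplicativity
      apply TensorProduct.ext'
      intro c a
      have hstep : Q ((lTensor (A ⊗[k] C)
              (ρ ∘ₗ ((TensorProduct.mk k (A ⊗[k] C) A).flip a)))
            (coringComul (k := k) ((1 : A) ⊗ₜ[k] c)))
          = (TensorProduct.assoc k A C C)
              ((rTensor C ψ) ((TensorProduct.assoc k C A C).symm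
                ((lTensor C ψ) ((TensorProduct.assoc k C C A)
                  ((Coalgebra.comul (R := k) c) ⊗ₜ[k] a))))) := by
        rw [coringComul_tmul]
        induction Coalgebra.comul (R := k) c using TensorProduct.induction_on with
        | zero => simp
        | add z w hz hw => simp only [map_add, add_tmul, hz, hw]
        | tmul c₁ c₂ =>
            simp only [map_tmul, mk_apply, lTensor_tmul, coe_comp,
              Function.comp_apply, flip_apply, TensorProduct.mk_apply, assoc_tmul]
            rw [← hψ c₂ a]
            generalize ψ (c₂ ⊗ₜ[k] a) = w
            induction w using TensorProduct.induction_on with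
            | zero => simp
            | add w₁ w₂ hw₁ hw₂ => simp only [tmul_add, map_add, hw₁, hw₂]
            | tmul b d =>
                rw [hQtmul]
                simp only [assoc_symm_tmul, rTensor_tmul]
                rw [hψ]
      have hd := hcmr ((1 : A) ⊗ₜ[k] c) a
      have hQd := hQ0 _ hd
      rw [map_sub, sub_eq_zero] at hQd
      simp only [coe_comp, Function.comp_apply, LinearEquiv.coe_coe, rTensor_tmul,
        TensorProduct.mk_apply]
      rw [hψ, ← hQcm, hQd, hstep]
    · -- counitality
      apply TensorProduct.ext'
      intro c a
      have hrw : ∀ x : A ⊗[k] C,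
          (TensorProduct.rid k A) ((lTensor A (Coalgebra.counit : C →ₗ[k] k)) x)
            = coringCounit (k := k) x := fun _ => rfl
      simp only [coe_comp, Function.comp_apply, LinearEquiv.coe_coe, rTensor_tmul,
        TensorProduct.mk_apply, lid_tmul]
      rw [hrw, hψ, hcr, coringCounit_tmul, smul_mul_assoc, one_mul]

end CGal
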